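/- Let h be an element of the Radford algebra H such that Δ(h) = h ⊗ g + 1 ⊗ h. Then there exist λ₁, λ₂, λ₃ ∈ ℂ such that h = λ₁x + λ₂y + λ₃(1 - g). -/

import Mathlib

open TensorProduct

noncomputable section

/-- The Gaussian (`q`-)binomial coefficient `C(m, k)_q`, defined by the `q`-Pascal
recurrence `C(m+1, k+1)_q = C(m, k)_q + q^(k+1) * C(m, k+1)_q`. -/
def qBinom (q : ℂ) : ℕ → ℕ → ℂ
  | _, 0 => 1
  | 0, _ + 1 => 0
  | m + 1, k + 1 => qBinom q m k + q ^ (k + 1) * qBinom q m (k + 1)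

lemma qBinom_zero (q : ℂ) (m : ℕ) : qBinom q m 0 = 1 := by cases m <;> rfl

lemma qBinom_succ (q : ℂ) (m k : ℕ) :
    qBinom q (m+1) (k+1) = qBinom q m k + q ^ (k+1) * qBinom q m (k+1) := rfl

lemma qBinom_eq_zero (q : ℂ) {m k : ℕ} (h : m < k) : qBinom q m k = 0 := by
  induction m generalizing k with
  | zero => obtain ⟨k, rfl⟩ := Nat.exists_eq_add_of_lt h; rfl
  | succ m ih =>
    obtain ⟨j, rfl⟩ : ∃ j, k = j + 1 := ⟨k - 1, by omega⟩
    rw [qBinom_succ, ih (by omega), ih (by omega), mul_zero, add_zero]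

lemma qBinom_one (q : ℂ) (m : ℕ) : qBinom q m 1 = ∑ i ∈ Finset.range m, q ^ i := by
  induction m with
  | zero => rfl
  | succ m ih =>
    rw [qBinom_succ, qBinom_zero, ih, Finset.sum_range_succ' _ m, Finset.mul_sum]
    simp [pow_succ, pow_zero, mul_comm, add_comm]

theorem qbinom_thm {T : Type*} [Ring T] [Algebra ℂ T] (A B : T) (q : ℂ)
    (hq : A * B = q • (B * A)) (m : ℕ) :
    (A + B) ^ m = ∑ k ∈ Finset.range (m + 1), qBinom q m k • (B ^ k * A ^ (m - k)) := by
  have hABk : ∀ k : ℕ, A * B ^ k = q ^ k • (B ^ k * A) := by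
    intro k
    induction k with
    | zero => simp
    | succ k ih =>
      calc A * B ^ (k+1) = (A * B) * B ^ k := by rw [pow_succ', ← mul_assoc]
        _ = q • (B * (A * B ^ k)) := by rw [hq, smul_mul_assoc, mul_assoc]
        _ = q • (B * (q ^ k • (B ^ k * A))) := by rw [ih]
        _ = q ^ (k+1) • (B ^ (k+1) * A) := by
            rw [mul_smul_comm, smul_smul, pow_succ' B, mul_assoc, ← pow_succ']
  induction m with
  | zero => simp [qBinom_zero]
  | succ m ih =>
    rw [pow_succ', ih, Finset.mul_sum]
    simp only [add_mul]
    rw [Finset.sum_add_distrib]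
    have e1 : ∀ k ∈ Finset.range (m+1),
        A * qBinom q m k • (B ^ k * A ^ (m - k))
          = (q ^ k * qBinom q m k) • (B ^ k * A ^ (m + 1 - k)) := by
      intro k hk
      rw [Finset.mem_range] at hk
      rw [mul_smul_comm, ← mul_assoc, hABk, smul_mul_assoc, smul_smul, mul_assoc,
        ← pow_succ', show m - k + 1 = m + 1 - k by omega, mul_comm (qBinom q m k) (q ^ k)]
    have e2 : ∀ k ∈ Finset.range (m+1),
        B * qBinom q m k • (B ^ k * A ^ (m - k))
          = qBinom q m k • (B ^ (k+1) * A ^ (m - k)) := by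
      intro k hk
      rw [mul_smul_comm, ← mul_assoc, ← pow_succ']
    rw [Finset.sum_congr rfl e1, Finset.sum_congr rfl e2]
    rw [Finset.sum_range_succ' (fun k => qBinom q (m+1) k • (B ^ k * A ^ (m + 1 - k))) (m+1)]
    have e3 : ∀ k ∈ Finset.range (m+1),
        qBinom q (m+1) (k+1) • (B ^ (k+1) * A ^ (m + 1 - (k+1)))
          = qBinom q m k • (B ^ (k+1) * A ^ (m - k))
            + (q ^ (k+1) * qBinom q m (k+1)) • (B ^ (k+1) * A ^ (m - k)) := by
      intro k hk
      rw [qBinom_succ, add_smul, show m + 1 - (k+1) = m - k by omega]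
    rw [Finset.sum_congr rfl e3, Finset.sum_add_distrib]
    have e4 : ∑ k ∈ Finset.range (m+1), (q ^ k * qBinom q m k) • (B ^ k * A ^ (m + 1 - k))
        = qBinom q (m+1) 0 • (B ^ 0 * A ^ (m+1-0))
          + ∑ k ∈ Finset.range (m+1), (q ^ (k+1) * qBinom q m (k+1)) • (B ^ (k+1) * A ^ (m - k)) := by
      rw [Finset.sum_range_succ' (fun k => (q ^ k * qBinom q m k) • (B ^ k * A ^ (m + 1 - k))) m]
      rw [Finset.sum_range_succ (fun k => (q ^ (k+1) * qBinom q m (k+1)) • (B ^ (k+1) * A ^ (m - k))) m]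
      rw [qBinom_eq_zero q (by omega : m < m + 1), mul_zero, zero_smul, add_zero,
        qBinom_zero, qBinom_zero, pow_zero, one_mul]
      rw [add_comm]
      congr 1
      apply Finset.sum_congr rfl
      intro k hk
      rw [Finset.mem_range] at hk
      rw [show m + 1 - (k + 1) = m - k by omega]
    rw [e4]
    abel


/-- The Radford algebra: a Hopf algebra `H` over `ℂ` generated by elements
`g, x, y` subject to the relations `g^n = 1`, `x^n = y^n = 0`, `xg = ω g x`,
`g y = ω y g`, `x y = ω y x`, where `ω` is a root of unity of order `n > 1`,
with the comultiplication, counit and antipode determined by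
`Δ(g) = g ⊗ g`, `ε(g) = 1`, `S(g) = g^(n-1)`,
`Δ(x) = x ⊗ g + 1 ⊗ x`, `ε(x) = 0`, `S(x) = -x g^(n-1)`,
`Δ(y) = y ⊗ g + 1 ⊗ y`, `ε(y) = 0`, `S(y) = -y g^(n-1)`,
and with canonical `ℂ`-basis `{y^r x^s g^l | 0 ≤ r, s, l < n}`. -/
structure RadfordAlgebra (n : ℕ) (ω : ℂ) (H : Type*) [Ring H] [HopfAlgebra ℂ H] where
  g : H
  x : H
  y : H
  hn : 1 < n
  hω : IsPrimitiveRoot ω n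
  g_pow : g ^ n = 1
  x_pow : x ^ n = 0
  y_pow : y ^ n = 0
  rel_xg : x * g = ω • (g * x)
  rel_gy : g * y = ω • (y * g)
  rel_xy : x * y = ω • (y * x)
  comul_g : Coalgebra.comul (R := ℂ) g = g ⊗ₜ[ℂ] g
  counit_g : Coalgebra.counit (R := ℂ) g = 1
  antipode_g : HopfAlgebra.antipode (R := ℂ) g = g ^ (n - 1)
  comul_x : Coalgebra.comul (R := ℂ) x = x ⊗ₜ[ℂ] g + 1 ⊗ₜ[ℂ] x
  counit_x : Coalgebra.counit (R := ℂ) x = 0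
  antipode_x : HopfAlgebra.antipode (R := ℂ) x = -(x * g ^ (n - 1))
  comul_y : Coalgebra.comul (R := ℂ) y = y ⊗ₜ[ℂ] g + 1 ⊗ₜ[ℂ] y
  counit_y : Coalgebra.counit (R := ℂ) y = 0
  antipode_y : HopfAlgebra.antipode (R := ℂ) y = -(y * g ^ (n - 1))
  gen : Algebra.adjoin ℂ ({g, x, y} : Set H) = ⊤
  basis : Module.Basis (Fin n × Fin n × Fin n) ℂ H
  basis_eq : ∀ r s l : Fin n, basis (r, s, l) = y ^ (r : ℕ) * x ^ (s : ℕ) * g ^ (l : ℕ)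

namespace RadfordAlgebra
variable {n : ℕ} {ω : ℂ} {H : Type*} [Ring H] [HopfAlgebra ℂ H] {R : RadfordAlgebra n ω H}

lemma npos (R : RadfordAlgebra n ω H) : 0 < n := lt_trans one_pos R.hn

lemma omega_ne_zero (R : RadfordAlgebra n ω H) : ω ≠ 0 :=
  R.hω.ne_zero (by have := R.hn; omega)

lemma gx : R.g * R.x = ω⁻¹ • (R.x * R.g) := by
  rw [R.rel_xg, smul_smul, inv_mul_cancel₀ R.omega_ne_zero, one_smul]

lemma g_pow_x : ∀ p : ℕ, R.g ^ p * R.x = (ω⁻¹) ^ p • (R.x * R.g ^ p) := by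
  intro p
  induction p with
  | zero => simp
  | succ p ih =>
    rw [pow_succ', mul_assoc, ih, mul_smul_comm, ← mul_assoc, R.gx, smul_mul_assoc,
      smul_smul, mul_assoc, ← pow_succ', ← pow_succ]

lemma g_pow_x_pow : ∀ p j : ℕ, R.g ^ p * R.x ^ j = (ω⁻¹) ^ (p * j) • (R.x ^ j * R.g ^ p) := by
  intro p j
  induction j with
  | zero => simp
  | succ j ih =>
    rw [pow_succ R.x j, ← mul_assoc, ih, smul_mul_assoc, mul_assoc, R.g_pow_x,
      mul_smul_comm, smul_smul, ← mul_assoc, ← pow_succ, ← pow_add,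
      show p * j + p = p * (j + 1) by ring]

lemma g_pow_mod (m : ℕ) : R.g ^ m = R.g ^ (m % n) := by
  conv_lhs => rw [← Nat.div_add_mod m n]
  rw [pow_add, pow_mul, R.g_pow, one_pow, one_mul]

lemma comul_y_pow (a : ℕ) :
    Coalgebra.comul (R := ℂ) (R.y ^ a) =
      ∑ k ∈ Finset.range (a + 1),
        qBinom ω a k • ((R.y ^ (a - k)) ⊗ₜ[ℂ] (R.y ^ k * R.g ^ (a - k))) := by
  rw [← Bialgebra.comulAlgHom_apply ℂ H, map_pow, Bialgebra.comulAlgHom_apply, R.comul_y]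
  rw [qbinom_thm (R.y ⊗ₜ[ℂ] R.g) (1 ⊗ₜ[ℂ] R.y) ω ?_ a]
  · apply Finset.sum_congr rfl
    intro k hk
    rw [Algebra.TensorProduct.tmul_pow, Algebra.TensorProduct.tmul_pow, one_pow,
      Algebra.TensorProduct.tmul_mul_tmul, one_mul]
  · rw [Algebra.TensorProduct.tmul_mul_tmul, Algebra.TensorProduct.tmul_mul_tmul,
      one_mul, mul_one, R.rel_gy, tmul_smul]

lemma comul_x_pow (b : ℕ) :
    Coalgebra.comul (R := ℂ) (R.x ^ b) =
      ∑ j ∈ Finset.range (b + 1),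
        qBinom ω⁻¹ b j • ((R.x ^ (b - j)) ⊗ₜ[ℂ] (R.x ^ j * R.g ^ (b - j))) := by
  rw [← Bialgebra.comulAlgHom_apply ℂ H, map_pow, Bialgebra.comulAlgHom_apply, R.comul_x]
  rw [qbinom_thm (R.x ⊗ₜ[ℂ] R.g) (1 ⊗ₜ[ℂ] R.x) ω⁻¹ ?_ b]
  · apply Finset.sum_congr rfl
    intro j hj
    rw [Algebra.TensorProduct.tmul_pow, Algebra.TensorProduct.tmul_pow, one_pow,
      Algebra.TensorProduct.tmul_mul_tmul, one_mul]
  · rw [Algebra.TensorProduct.tmul_mul_tmul, Algebra.TensorProduct.tmul_mul_tmul,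
      one_mul, mul_one, R.gx, tmul_smul]

lemma comul_g_pow (c : ℕ) :
    Coalgebra.comul (R := ℂ) (R.g ^ c) = (R.g ^ c) ⊗ₜ[ℂ] (R.g ^ c) := by
  rw [← Bialgebra.comulAlgHom_apply ℂ H, map_pow, Bialgebra.comulAlgHom_apply, R.comul_g,
    Algebra.TensorProduct.tmul_pow]

lemma comul_mono (a b c : ℕ) :
    Coalgebra.comul (R := ℂ) (R.y ^ a * R.x ^ b * R.g ^ c) =
      ∑ k ∈ Finset.range (a + 1), ∑ j ∈ Finset.range (b + 1),
        (qBinom ω a k * qBinom ω⁻¹ b j * ω⁻¹ ^ ((a - k) * j)) •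
          ((R.y ^ (a - k) * R.x ^ (b - j) * R.g ^ c) ⊗ₜ[ℂ]
            (R.y ^ k * R.x ^ j * R.g ^ (a - k + (b - j) + c))) := by
  rw [← Bialgebra.comulAlgHom_apply ℂ H, map_mul, map_mul,
    Bialgebra.comulAlgHom_apply, Bialgebra.comulAlgHom_apply, Bialgebra.comulAlgHom_apply,
    R.comul_y_pow, R.comul_x_pow, R.comul_g_pow]
  rw [Finset.sum_mul_sum, Finset.sum_mul]
  apply Finset.sum_congr rfl
  intro k hk
  rw [Finset.sum_mul]
  apply Finset.sum_congr rfl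
  intro j hj
  have h2 : (R.y ^ k * R.g ^ (a - k)) * (R.x ^ j * R.g ^ (b - j)) * R.g ^ c
      = ω⁻¹ ^ ((a - k) * j) • (R.y ^ k * R.x ^ j * R.g ^ (a - k + (b - j) + c)) := by
    have e : (R.y ^ k * R.g ^ (a - k)) * (R.x ^ j * R.g ^ (b - j)) * R.g ^ c
        = R.y ^ k * (R.g ^ (a - k) * R.x ^ j) * (R.g ^ (b - j) * R.g ^ c) := by
      noncomm_ring
    rw [e, R.g_pow_x_pow, mul_smul_comm, smul_mul_assoc, ← pow_add]
    congr 1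
    calc R.y ^ k * (R.x ^ j * R.g ^ (a - k)) * R.g ^ (b - j + c)
        = R.y ^ k * R.x ^ j * (R.g ^ (a - k) * R.g ^ (b - j + c)) := by noncomm_ring
      _ = R.y ^ k * R.x ^ j * R.g ^ (a - k + (b - j) + c) := by
          rw [← pow_add, show a - k + (b - j + c) = a - k + (b - j) + c by omega]
  simp only [smul_mul_assoc, mul_smul_comm, smul_smul, Algebra.TensorProduct.tmul_mul_tmul]
  rw [h2, tmul_smul, smul_smul]
  congr 1
  ring

lemma qBinom_one_ne_zero (R : RadfordAlgebra n ω H) {q : ℂ} (hq : IsPrimitiveRoot q n)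
    {m : ℕ} (h1 : 0 < m) (h2 : m < n) : qBinom q m 1 ≠ 0 := by
  rw [qBinom_one]
  have hq1 : q ≠ 1 := hq.ne_one R.hn
  rw [geom_sum_eq hq1]
  intro h0
  rcases div_eq_zero_iff.mp h0 with h | h
  · exact hq.pow_ne_one_of_pos_of_lt h1.ne' h2 (by linear_combination h)
  · exact hq1 (by linear_combination h)

lemma mono_eq_basis (a b c : ℕ) (ha : a < n) (hb : b < n) :
    R.y ^ a * R.x ^ b * R.g ^ c
      = R.basis (⟨a, ha⟩, ⟨b, hb⟩, ⟨c % n, Nat.mod_lt c R.npos⟩) := by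
  rw [R.basis_eq]
  simp only
  rw [← R.g_pow_mod]

lemma repr_comul_basis (r s l r₁ s₁ l₁ r₂ s₂ l₂ : Fin n) :
    ((R.basis.tensorProduct R.basis).repr
        (Coalgebra.comul (R := ℂ) (R.basis (r, s, l)))) ((r₁, s₁, l₁), (r₂, s₂, l₂))
      = if ((r : ℕ) = r₁ + r₂ ∧ (s : ℕ) = s₁ + s₂ ∧ l = l₁
            ∧ (l₂ : ℕ) = ((r₁ : ℕ) + s₁ + l₁) % n) then
          qBinom ω r r₂ * qBinom ω⁻¹ s s₂ * ω⁻¹ ^ ((r₁ : ℕ) * s₂)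
        else 0 := by
  have expand : ((R.basis.tensorProduct R.basis).repr
        (Coalgebra.comul (R := ℂ) (R.basis (r, s, l)))) ((r₁, s₁, l₁), (r₂, s₂, l₂))
      = ∑ k ∈ Finset.range ((r : ℕ) + 1), ∑ j ∈ Finset.range ((s : ℕ) + 1),
          (qBinom ω r k * qBinom ω⁻¹ s j * ω⁻¹ ^ (((r : ℕ) - k) * j)) *
            ((R.basis.repr (R.y ^ k * R.x ^ j * R.g ^ ((r : ℕ) - k + ((s : ℕ) - j) + l)))
                (r₂, s₂, l₂)
              * (R.basis.repr (R.y ^ ((r : ℕ) - k) * R.x ^ ((s : ℕ) - j) * R.g ^ (l : ℕ)))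
                  (r₁, s₁, l₁)) := by
    rw [R.basis_eq, R.comul_mono, map_sum, Finsupp.finset_sum_apply]
    apply Finset.sum_congr rfl
    intro k _
    rw [map_sum, Finsupp.finset_sum_apply]
    apply Finset.sum_congr rfl
    intro j _
    rw [map_smul, Finsupp.smul_apply, Module.Basis.tensorProduct_repr_tmul_apply,
      smul_eq_mul, smul_eq_mul]
  rw [expand]
  by_cases hC : (r : ℕ) = r₁ + r₂ ∧ (s : ℕ) = s₁ + s₂ ∧ l = l₁
      ∧ (l₂ : ℕ) = ((r₁ : ℕ) + s₁ + l₁) % n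
  · obtain ⟨h1, h2, h3, h4⟩ := hC
    rw [if_pos ⟨h1, h2, h3, h4⟩]
    rw [Finset.sum_eq_single ((r₂ : ℕ))]
    rotate_left
    · intro k hk hne
      apply Finset.sum_eq_zero
      intro j hj
      rw [Finset.mem_range] at hk hj
      rw [R.mono_eq_basis k j _ (by omega) (by omega), Module.Basis.repr_self,
        Finsupp.single_apply, if_neg, zero_mul, mul_zero]
      intro hEq
      apply hne
      have := congrArg (fun p => (p.1 : ℕ)) hEq
      simpa using this
    · intro habs
      exact absurd (Finset.mem_range.mpr (by omega)) habs
    rw [Finset.sum_eq_single ((s₂ : ℕ))]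
    rotate_left
    · intro j hj hne
      rw [Finset.mem_range] at hj
      rw [R.mono_eq_basis (r₂ : ℕ) j _ r₂.isLt (by omega), Module.Basis.repr_self,
        Finsupp.single_apply, if_neg, zero_mul, mul_zero]
      intro hEq
      apply hne
      have := congrArg (fun p => (p.2.1 : ℕ)) hEq
      simpa using this
    · intro habs
      exact absurd (Finset.mem_range.mpr (by omega)) habs
    have e2 : R.basis.repr (R.y ^ (r₂ : ℕ) * R.x ^ (s₂ : ℕ)
        * R.g ^ ((r : ℕ) - r₂ + ((s : ℕ) - s₂) + l)) (r₂, s₂, l₂) = 1 := by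
      rw [R.mono_eq_basis _ _ _ r₂.isLt s₂.isLt, Module.Basis.repr_self, Finsupp.single_apply,
        if_pos]
      have : ((r : ℕ) - r₂ + ((s : ℕ) - s₂) + l) % n = (l₂ : ℕ) := by
        rw [h4]
        congr 1
        omega
      exact Prod.ext rfl (Prod.ext rfl (Fin.ext this))
    have e1 : R.basis.repr (R.y ^ ((r : ℕ) - r₂) * R.x ^ ((s : ℕ) - s₂)
        * R.g ^ (l : ℕ)) (r₁, s₁, l₁) = 1 := by
      rw [R.mono_eq_basis _ _ _ (by omega) (by omega), Module.Basis.repr_self,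
        Finsupp.single_apply, if_pos]
      refine Prod.ext (Fin.ext ?_) (Prod.ext (Fin.ext ?_) (Fin.ext ?_))
      · show (r : ℕ) - r₂ = r₁
        omega
      · show (s : ℕ) - s₂ = s₁
        omega
      · show (l : ℕ) % n = l₁
        rw [Nat.mod_eq_of_lt l.isLt, h3]
    rw [e1, e2, one_mul, mul_one, show (r : ℕ) - (r₂ : ℕ) = (r₁ : ℕ) by omega]
  · rw [if_neg hC]
    apply Finset.sum_eq_zero
    intro k hk
    apply Finset.sum_eq_zero
    intro j hj
    rw [Finset.mem_range] at hk hj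
    rw [R.mono_eq_basis k j _ (by omega) (by omega),
      R.mono_eq_basis ((r : ℕ) - k) ((s : ℕ) - j) _ (by omega) (by omega),
      Module.Basis.repr_self, Module.Basis.repr_self, Finsupp.single_apply, Finsupp.single_apply]
    by_cases hP2 : ((⟨k, by omega⟩ : Fin n), (⟨j, by omega⟩ : Fin n),
        (⟨((r : ℕ) - k + ((s : ℕ) - j) + l) % n, Nat.mod_lt _ R.npos⟩ : Fin n)) = (r₂, s₂, l₂)
    · by_cases hP1 : ((⟨(r : ℕ) - k, by omega⟩ : Fin n), (⟨(s : ℕ) - j, by omega⟩ : Fin n),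
          (⟨(l : ℕ) % n, Nat.mod_lt _ R.npos⟩ : Fin n)) = (r₁, s₁, l₁)
      · exfalso
        apply hC
        have q1 : (r : ℕ) - k = r₁ := by simpa using congrArg (fun p => (p.1 : ℕ)) hP1
        have q2 : (s : ℕ) - j = s₁ := by simpa using congrArg (fun p => (p.2.1 : ℕ)) hP1
        have q3 : (l : ℕ) % n = l₁ := by simpa using congrArg (fun p => (p.2.2 : ℕ)) hP1
        have p1 : k = (r₂ : ℕ) := by simpa using congrArg (fun p => (p.1 : ℕ)) hP2
        have p2 : j = (s₂ : ℕ) := by simpa using congrArg (fun p => (p.2.1 : ℕ)) hP2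
        have p3 : ((r : ℕ) - k + ((s : ℕ) - j) + l) % n = l₂ := by
          simpa using congrArg (fun p => (p.2.2 : ℕ)) hP2
        have hl : l = l₁ := Fin.ext (by rw [← q3, Nat.mod_eq_of_lt l.isLt])
        refine ⟨by omega, by omega, hl, ?_⟩
        rw [← p3]
        congr 1
        have hll : (l : ℕ) % n = (l : ℕ) := Nat.mod_eq_of_lt l.isLt
        omega
      · rw [if_neg hP1, mul_zero, mul_zero]
    · rw [if_neg hP2, zero_mul, mul_zero]

lemma one_eq_basis : (1 : H) = R.basis (⟨0, R.npos⟩, ⟨0, R.npos⟩, ⟨0, R.npos⟩) := by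
  rw [R.basis_eq]
  simp

lemma g_eq_basis : R.g = R.basis (⟨0, R.npos⟩, ⟨0, R.npos⟩, ⟨1, R.hn⟩) := by
  rw [R.basis_eq]
  simp

lemma master (h : H)
    (hh : Coalgebra.comul (R := ℂ) h = h ⊗ₜ[ℂ] R.g + 1 ⊗ₜ[ℂ] h)
    (r₁ s₁ l₁ r₂ s₂ l₂ : Fin n)
    (hr : (r₁ : ℕ) + (r₂ : ℕ) < n) (hs : (s₁ : ℕ) + (s₂ : ℕ) < n) :
    (if (l₂ : ℕ) = ((r₁ : ℕ) + s₁ + l₁) % n then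
        R.basis.repr h (⟨(r₁ : ℕ) + r₂, hr⟩, ⟨(s₁ : ℕ) + s₂, hs⟩, l₁)
          * (qBinom ω ((r₁ : ℕ) + r₂) r₂ * qBinom ω⁻¹ ((s₁ : ℕ) + s₂) s₂
              * ω⁻¹ ^ ((r₁ : ℕ) * s₂))
      else 0)
    = (if ((⟨0, R.npos⟩, ⟨0, R.npos⟩, ⟨1, R.hn⟩) : Fin n × Fin n × Fin n) = (r₂, s₂, l₂)
          then R.basis.repr h (r₁, s₁, l₁) else 0)
      + (if ((⟨0, R.npos⟩, ⟨0, R.npos⟩, ⟨0, R.npos⟩) : Fin n × Fin n × Fin n) = (r₁, s₁, l₁)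
          then R.basis.repr h (r₂, s₂, l₂) else 0) := by
  have base := congrArg
    (fun w => (((R.basis.tensorProduct R.basis).repr) w) ((r₁, s₁, l₁), (r₂, s₂, l₂))) hh
  have L1 : (((R.basis.tensorProduct R.basis).repr) (Coalgebra.comul (R := ℂ) h))
        ((r₁, s₁, l₁), (r₂, s₂, l₂))
      = ∑ i : Fin n × Fin n × Fin n, R.basis.repr h i *
          (if ((i.1 : ℕ) = r₁ + r₂ ∧ (i.2.1 : ℕ) = s₁ + s₂ ∧ i.2.2 = l₁
                ∧ (l₂ : ℕ) = ((r₁ : ℕ) + s₁ + l₁) % n) then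
              qBinom ω i.1 r₂ * qBinom ω⁻¹ i.2.1 s₂ * ω⁻¹ ^ ((r₁ : ℕ) * s₂)
            else 0) := by
    conv_lhs => rw [← Module.Basis.sum_repr R.basis h]
    rw [map_sum, map_sum, Finsupp.finset_sum_apply]
    apply Finset.sum_congr rfl
    intro i _
    rw [map_smul, map_smul, Finsupp.smul_apply, smul_eq_mul]
    congr 1
    obtain ⟨a, b, cc⟩ := i
    exact R.repr_comul_basis a b cc r₁ s₁ l₁ r₂ s₂ l₂
  have L2 : ∑ i : Fin n × Fin n × Fin n, R.basis.repr h i *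
          (if ((i.1 : ℕ) = r₁ + r₂ ∧ (i.2.1 : ℕ) = s₁ + s₂ ∧ i.2.2 = l₁
                ∧ (l₂ : ℕ) = ((r₁ : ℕ) + s₁ + l₁) % n) then
              qBinom ω i.1 r₂ * qBinom ω⁻¹ i.2.1 s₂ * ω⁻¹ ^ ((r₁ : ℕ) * s₂)
            else 0)
      = (if (l₂ : ℕ) = ((r₁ : ℕ) + s₁ + l₁) % n then
          R.basis.repr h (⟨(r₁ : ℕ) + r₂, hr⟩, ⟨(s₁ : ℕ) + s₂, hs⟩, l₁)
            * (qBinom ω ((r₁ : ℕ) + r₂) r₂ * qBinom ω⁻¹ ((s₁ : ℕ) + s₂) s₂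
                * ω⁻¹ ^ ((r₁ : ℕ) * s₂))
        else 0) := by
    rw [Finset.sum_eq_single
      ((⟨(r₁ : ℕ) + r₂, hr⟩ : Fin n), (⟨(s₁ : ℕ) + s₂, hs⟩ : Fin n), l₁)]
    · by_cases hc : (l₂ : ℕ) = ((r₁ : ℕ) + s₁ + l₁) % n
      · rw [if_pos ⟨rfl, rfl, rfl, hc⟩, if_pos hc]
      · rw [if_neg (by simp [hc]), if_neg hc, mul_zero]
    · intro i _ hne
      by_cases hc : ((i.1 : ℕ) = r₁ + r₂ ∧ (i.2.1 : ℕ) = s₁ + s₂ ∧ i.2.2 = l₁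
          ∧ (l₂ : ℕ) = ((r₁ : ℕ) + s₁ + l₁) % n)
      · exact absurd (Prod.ext (Fin.ext hc.1) (Prod.ext (Fin.ext hc.2.1) hc.2.2.1)) hne
      · rw [if_neg hc, mul_zero]
    · intro habs
      exact absurd (Finset.mem_univ _) habs
  have R1 : (((R.basis.tensorProduct R.basis).repr) (h ⊗ₜ[ℂ] R.g + 1 ⊗ₜ[ℂ] h))
        ((r₁, s₁, l₁), (r₂, s₂, l₂))
      = (if ((⟨0, R.npos⟩, ⟨0, R.npos⟩, ⟨1, R.hn⟩) : Fin n × Fin n × Fin n) = (r₂, s₂, l₂)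
            then R.basis.repr h (r₁, s₁, l₁) else 0)
        + (if ((⟨0, R.npos⟩, ⟨0, R.npos⟩, ⟨0, R.npos⟩) : Fin n × Fin n × Fin n) = (r₁, s₁, l₁)
            then R.basis.repr h (r₂, s₂, l₂) else 0) := by
    rw [map_add, Finsupp.add_apply, Module.Basis.tensorProduct_repr_tmul_apply,
      Module.Basis.tensorProduct_repr_tmul_apply]
    rw [R.g_eq_basis, R.one_eq_basis, Module.Basis.repr_self, Module.Basis.repr_self,
      Finsupp.single_apply, Finsupp.single_apply]
    rw [smul_eq_mul, smul_eq_mul, ite_mul, one_mul, zero_mul, mul_ite, mul_one, mul_zero]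
  rw [← L2, ← L1, base, R1]

lemma x_eq_basis : R.x = R.basis (⟨0, R.npos⟩, ⟨1, R.hn⟩, ⟨0, R.npos⟩) := by
  rw [R.basis_eq]
  simp

lemma y_eq_basis : R.y = R.basis (⟨1, R.hn⟩, ⟨0, R.npos⟩, ⟨0, R.npos⟩) := by
  rw [R.basis_eq]
  simp

end RadfordAlgebra

/-- A `*`-structure on a Hopf algebra `H` over `ℂ`: a conjugate-linear map
`* : H → H` such that `(h*)* = h`, `(hl)* = l* h*`,
`Δ(h*) = Σ (h₁)* ⊗ (h₂)*` and `S(S(h*)*) = h` for all `h, l ∈ H`.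
(The condition on `Δ` is expressed via the auxiliary additive map `starTensor`
on `H ⊗[ℂ] H` sending `a ⊗ b` to `a* ⊗ b*`, which is uniquely determined by
its two defining properties.) -/
structure HopfStarStructure (H : Type*) [Ring H] [HopfAlgebra ℂ H] where
  star : H → H
  star_add : ∀ a b : H, star (a + b) = star a + star b
  star_smul : ∀ (c : ℂ) (a : H), star (c • a) = (starRingEnd ℂ c) • star a
  star_star : ∀ a : H, star (star a) = a
  star_mul : ∀ a b : H, star (a * b) = star b * star a
  starTensor : H ⊗[ℂ] H → H ⊗[ℂ] H
  starTensor_add : ∀ u v : H ⊗[ℂ] H, starTensor (u + v) = starTensor u + starTensor v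
  starTensor_tmul : ∀ a b : H, starTensor (a ⊗ₜ[ℂ] b) = star a ⊗ₜ[ℂ] star b
  comul_star : ∀ a : H,
    Coalgebra.comul (R := ℂ) (star a) = starTensor (Coalgebra.comul (R := ℂ) a)
  antipode_star : ∀ a : H,
    HopfAlgebra.antipode (R := ℂ) (star (HopfAlgebra.antipode (R := ℂ) (star a))) = a

/-- Two `*`-structures `*'` and `*''` on a Hopf algebra `H` over `ℂ` are
equivalent if there is a Hopf algebra automorphism `ψ` of `H` such that
`ψ(h^{*'}) = ψ(h)^{*''}` for all `h ∈ H`. -/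
def HopfStarStructure.Equivalent {H : Type*} [Ring H] [HopfAlgebra ℂ H]
    (s₁ s₂ : HopfStarStructure H) : Prop :=
  ∃ ψ : H ≃ₐc[ℂ] H, ∀ h : H, ψ (s₁.star h) = s₂.star (ψ h)

/-- if `Δ(h) = h ⊗ g + 1 ⊗ h` then
`h = λ₁ x + λ₂ y + λ₃ (1 - g)` for some `λ₁, λ₂, λ₃ ∈ ℂ`. -/
theorem radford_g_primitive
    {n : ℕ} {ω : ℂ} {H : Type*} [Ring H] [HopfAlgebra ℂ H]
    (R : RadfordAlgebra n ω H) (h : H)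
    (hh : Coalgebra.comul (R := ℂ) h = h ⊗ₜ[ℂ] R.g + 1 ⊗ₜ[ℂ] h) :
    ∃ l₁ l₂ l₃ : ℂ, h = l₁ • R.x + l₂ • R.y + l₃ • (1 - R.g) := by
  have c : Fin n × Fin n × Fin n → ℂ := fun i => R.basis.repr h i
  -- (B)
  have hB : R.basis.repr h (⟨0, R.npos⟩, ⟨0, R.npos⟩, ⟨0, R.npos⟩)
      + R.basis.repr h (⟨0, R.npos⟩, ⟨0, R.npos⟩, ⟨1, R.hn⟩) = 0 := by
    have hm : ¬ (((⟨1, R.hn⟩ : Fin n) : ℕ)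
        = (((⟨0, R.npos⟩ : Fin n) : ℕ) + ((⟨0, R.npos⟩ : Fin n) : ℕ)
            + ((⟨0, R.npos⟩ : Fin n) : ℕ)) % n) := by
      simp only [Fin.val_mk]
      simp
    have hkey := R.master h hh ⟨0, R.npos⟩ ⟨0, R.npos⟩ ⟨0, R.npos⟩ ⟨0, R.npos⟩ ⟨0, R.npos⟩
      ⟨1, R.hn⟩ (by simpa using R.npos) (by simpa using R.npos)
    rw [if_neg hm, if_pos rfl, if_pos rfl] at hkey
    exact hkey.symm
  -- (A)
  have hA : ∀ r s l : Fin n,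
      ¬((r : ℕ) = 0 ∧ (s : ℕ) = 0 ∧ (l : ℕ) = 0) →
      ((r : ℕ) + s + l) % n ≠ 1 → R.basis.repr h (r, s, l) = 0 := by
    intro r s l hne hm
    have hlt : ((r : ℕ) + s + l) % n < n := Nat.mod_lt _ R.npos
    have hkey := R.master h hh r s l ⟨0, R.npos⟩ ⟨0, R.npos⟩ ⟨((r : ℕ) + s + l) % n, hlt⟩
      (by simpa using r.isLt) (by simpa using s.isLt)
    rw [if_pos rfl, if_neg, if_neg] at hkey
    · simp only [Fin.val_mk, Nat.add_zero, Nat.mul_zero, pow_zero, qBinom_zero,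
        mul_one, one_mul, Fin.eta, add_zero] at hkey
      exact hkey
    · intro hEq
      apply hne
      rw [Prod.mk.injEq, Prod.mk.injEq] at hEq
      exact ⟨(congrArg Fin.val hEq.1).symm, (congrArg Fin.val hEq.2.1).symm,
        (congrArg Fin.val hEq.2.2).symm⟩
    · intro hEq
      apply hm
      rw [Prod.mk.injEq, Prod.mk.injEq] at hEq
      exact (congrArg Fin.val hEq.2.2).symm
  -- (C)
  have hC : ∀ r s l : Fin n, 1 ≤ (s : ℕ) →
      ¬((r : ℕ) = 0 ∧ (s : ℕ) = 1 ∧ (l : ℕ) = 0) → R.basis.repr h (r, s, l) = 0 := by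
    intro r s l hs1 hne
    have hlt : ((r : ℕ) + ((s : ℕ) - 1) + l) % n < n := Nat.mod_lt _ R.npos
    have hkey := R.master h hh r ⟨(s : ℕ) - 1, by omega⟩ l ⟨0, R.npos⟩ ⟨1, R.hn⟩
      ⟨((r : ℕ) + ((s : ℕ) - 1) + l) % n, hlt⟩
      (by simpa using r.isLt) (by have := s.isLt; simp; omega)
    rw [if_pos rfl, if_neg, if_neg] at hkey
    · simp only [Fin.val_mk, Nat.add_zero, Nat.mul_one, qBinom_zero, mul_one, one_mul,
        show (s : ℕ) - 1 + 1 = (s : ℕ) from by omega, Fin.eta, add_zero] at hkey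
      rcases mul_eq_zero.mp hkey with h' | h'
      · exact h'
      · exfalso
        rcases mul_eq_zero.mp h' with h'' | h''
        · exact R.qBinom_one_ne_zero R.hω.inv hs1 s.isLt h''
        · exact pow_ne_zero _ (inv_ne_zero R.omega_ne_zero) h''
    · intro hEq
      apply hne
      rw [Prod.mk.injEq, Prod.mk.injEq] at hEq
      have e1 : (0 : ℕ) = (r : ℕ) := congrArg Fin.val hEq.1
      have e2 : (0 : ℕ) = (s : ℕ) - 1 := congrArg Fin.val hEq.2.1
      have e3 : (0 : ℕ) = (l : ℕ) := congrArg Fin.val hEq.2.2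
      exact ⟨by omega, by omega, by omega⟩
    · intro hEq
      rw [Prod.mk.injEq, Prod.mk.injEq] at hEq
      exact Nat.zero_ne_one (congrArg Fin.val hEq.2.1)
  -- (D)
  have hD : ∀ r s l : Fin n, 1 ≤ (r : ℕ) →
      ¬((r : ℕ) = 1 ∧ (s : ℕ) = 0 ∧ (l : ℕ) = 0) → R.basis.repr h (r, s, l) = 0 := by
    intro r s l hr1 hne
    have hlt : (((r : ℕ) - 1) + s + l) % n < n := Nat.mod_lt _ R.npos
    have hkey := R.master h hh ⟨(r : ℕ) - 1, by omega⟩ s l ⟨1, R.hn⟩ ⟨0, R.npos⟩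
      ⟨(((r : ℕ) - 1) + s + l) % n, hlt⟩
      (by have := r.isLt; simp; omega) (by simpa using s.isLt)
    rw [if_pos rfl, if_neg, if_neg] at hkey
    · simp only [Fin.val_mk, Nat.add_zero, Nat.mul_zero, pow_zero, qBinom_zero, mul_one,
        one_mul, show (r : ℕ) - 1 + 1 = (r : ℕ) from by omega, Fin.eta, add_zero] at hkey
      rcases mul_eq_zero.mp hkey with h' | h'
      · exact h'
      · exact absurd h' (R.qBinom_one_ne_zero R.hω hr1 r.isLt)
    · intro hEq
      apply hne
      rw [Prod.mk.injEq, Prod.mk.injEq] at hEq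
      have e1 : (0 : ℕ) = (r : ℕ) - 1 := congrArg Fin.val hEq.1
      have e2 : (0 : ℕ) = (s : ℕ) := congrArg Fin.val hEq.2.1
      have e3 : (0 : ℕ) = (l : ℕ) := congrArg Fin.val hEq.2.2
      exact ⟨by omega, by omega, by omega⟩
    · intro hEq
      rw [Prod.mk.injEq, Prod.mk.injEq] at hEq
      exact Nat.zero_ne_one (congrArg Fin.val hEq.1)
  -- assembly
  refine ⟨R.basis.repr h (⟨0, R.npos⟩, ⟨1, R.hn⟩, ⟨0, R.npos⟩),
    R.basis.repr h (⟨1, R.hn⟩, ⟨0, R.npos⟩, ⟨0, R.npos⟩),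
    R.basis.repr h (⟨0, R.npos⟩, ⟨0, R.npos⟩, ⟨0, R.npos⟩), ?_⟩
  apply R.basis.ext_elem
  intro i
  obtain ⟨r, s, l⟩ := i
  rw [map_add, map_add, map_smul, map_smul, map_smul, map_sub,
    R.x_eq_basis, R.y_eq_basis, R.one_eq_basis, R.g_eq_basis,
    Module.Basis.repr_self, Module.Basis.repr_self, Module.Basis.repr_self, Module.Basis.repr_self,
    Finsupp.add_apply, Finsupp.add_apply, Finsupp.smul_apply, Finsupp.smul_apply,
    Finsupp.smul_apply, Finsupp.sub_apply, Finsupp.single_apply, Finsupp.single_apply,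
    Finsupp.single_apply, Finsupp.single_apply, smul_eq_mul, smul_eq_mul, smul_eq_mul]
  have fx : (((⟨0, R.npos⟩ : Fin n), (⟨1, R.hn⟩ : Fin n), (⟨0, R.npos⟩ : Fin n)) = (r, s, l))
      ↔ ((r : ℕ) = 0 ∧ (s : ℕ) = 1 ∧ (l : ℕ) = 0) := by
    rw [Prod.mk.injEq, Prod.mk.injEq, Fin.ext_iff, Fin.ext_iff, Fin.ext_iff]
    simp [eq_comm]
  have fy : (((⟨1, R.hn⟩ : Fin n), (⟨0, R.npos⟩ : Fin n), (⟨0, R.npos⟩ : Fin n)) = (r, s, l))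
      ↔ ((r : ℕ) = 1 ∧ (s : ℕ) = 0 ∧ (l : ℕ) = 0) := by
    rw [Prod.mk.injEq, Prod.mk.injEq, Fin.ext_iff, Fin.ext_iff, Fin.ext_iff]
    simp [eq_comm]
  have f1 : (((⟨0, R.npos⟩ : Fin n), (⟨0, R.npos⟩ : Fin n), (⟨0, R.npos⟩ : Fin n)) = (r, s, l))
      ↔ ((r : ℕ) = 0 ∧ (s : ℕ) = 0 ∧ (l : ℕ) = 0) := by
    rw [Prod.mk.injEq, Prod.mk.injEq, Fin.ext_iff, Fin.ext_iff, Fin.ext_iff]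
    simp [eq_comm]
  have fg : (((⟨0, R.npos⟩ : Fin n), (⟨0, R.npos⟩ : Fin n), (⟨1, R.hn⟩ : Fin n)) = (r, s, l))
      ↔ ((r : ℕ) = 0 ∧ (s : ℕ) = 0 ∧ (l : ℕ) = 1) := by
    rw [Prod.mk.injEq, Prod.mk.injEq, Fin.ext_iff, Fin.ext_iff, Fin.ext_iff]
    simp [eq_comm]
  simp only [fx, fy, f1, fg]
  by_cases h1 : (r : ℕ) = 0 ∧ (s : ℕ) = 1 ∧ (l : ℕ) = 0
  · have heq : (r, s, l) = ((⟨0, R.npos⟩ : Fin n), (⟨1, R.hn⟩ : Fin n), (⟨0, R.npos⟩ : Fin n)) :=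
      Prod.ext (Fin.ext h1.1) (Prod.ext (Fin.ext h1.2.1) (Fin.ext h1.2.2))
    rw [heq, if_pos h1, if_neg (by omega), if_neg (by omega), if_neg (by omega)]
    ring
  by_cases h2 : (r : ℕ) = 1 ∧ (s : ℕ) = 0 ∧ (l : ℕ) = 0
  · have heq : (r, s, l) = ((⟨1, R.hn⟩ : Fin n), (⟨0, R.npos⟩ : Fin n), (⟨0, R.npos⟩ : Fin n)) :=
      Prod.ext (Fin.ext h2.1) (Prod.ext (Fin.ext h2.2.1) (Fin.ext h2.2.2))
    rw [heq, if_pos h2, if_neg (by omega), if_neg (by omega), if_neg (by omega)]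
    ring
  by_cases h3 : (r : ℕ) = 0 ∧ (s : ℕ) = 0 ∧ (l : ℕ) = 0
  · have heq : (r, s, l) = ((⟨0, R.npos⟩ : Fin n), (⟨0, R.npos⟩ : Fin n), (⟨0, R.npos⟩ : Fin n)) :=
      Prod.ext (Fin.ext h3.1) (Prod.ext (Fin.ext h3.2.1) (Fin.ext h3.2.2))
    rw [heq, if_pos h3, if_neg (by omega), if_neg (by omega), if_neg (by omega)]
    ring
  by_cases h4 : (r : ℕ) = 0 ∧ (s : ℕ) = 0 ∧ (l : ℕ) = 1
  · have heq : (r, s, l) = ((⟨0, R.npos⟩ : Fin n), (⟨0, R.npos⟩ : Fin n), (⟨1, R.hn⟩ : Fin n)) :=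
      Prod.ext (Fin.ext h4.1) (Prod.ext (Fin.ext h4.2.1) (Fin.ext h4.2.2))
    rw [heq, if_pos h4, if_neg (by omega), if_neg (by omega), if_neg (by omega)]
    linear_combination hB
  · rw [if_neg h1, if_neg h2, if_neg h3, if_neg h4]
    have hzero : R.basis.repr h (r, s, l) = 0 := by
      rcases Nat.eq_zero_or_pos (r : ℕ) with hr0 | hr1
      · rcases Nat.eq_zero_or_pos (s : ℕ) with hs0 | hs1
        · have hml : ((r : ℕ) + s + l) % n = (l : ℕ) := by
            rw [hr0, hs0]
            simpa using Nat.mod_eq_of_lt l.isLt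
          apply hA r s l (by omega)
          intro hcon
          rw [hml] at hcon
          exact h4 ⟨hr0, hs0, hcon⟩
        · exact hC r s l hs1 (by omega)
      · exact hD r s l hr1 (by omega)
    rw [hzero]
    ring
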